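/- Let ℓ ≥ 1 be an integer and assume X_{ℓ-1}⁺ = S. Fix an integer k with 0 < k ≤ ℓ, an integer m ≥ 1 with k − m ≥ 0, and an integer l with 0 < l ≤ k − m + 1. For 0 ≤ j ≤ l define H_j = X_{j-1}(X_j ∩ Y_{k-j}) and J_j = X_{j-1}(X_j ∩ Y_{k-j-m}), and define H_{[0,l]} = {(b₀,…,b_l) ∈ B^{l+1} : b_j ∈ H_j for all 0 ≤ j ≤ l, and b_j⁺ = b_{j+1}⁻ for all 0 ≤ j < l}, and J_{[0,l]} analogously. Then there exists a right transversal T of J_{[0,l]} in H_{[0,l]} (a subset of H_{[0,l]} meeting each right coset of J_{[0,l]} in exactly one element) such that for every 0 ≤ j ≤ l the j-th coordinate map t ↦ t_j is injective on T and the set {t_j : t ∈ T} is a right transversal of J_j in H_j. -/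

import Mathlib

open Pointwise

namespace GroupCodes

variable {S : Type*} [Group S]

/-- The subgroups `Xₙ` of the branch group `B ≤ S × S`: `X₀ = {b ∈ B : b⁻ = 1}` and
`X_{n+1} = {b ∈ B : b⁻ ∈ Xₙ⁺}` (here `b⁻ = b.1`, `b⁺ = b.2`, `U⁺ = snd '' U`). -/
def Xnat (B : Subgroup (S × S)) : ℕ → Subgroup (S × S)
  | 0 => B ⊓ (MonoidHom.fst S S).ker
  | n + 1 => B ⊓ (Subgroup.map (MonoidHom.snd S S) (Xnat B n)).comap (MonoidHom.fst S S)

/-- The subgroups `Yₙ` of the branch group `B ≤ S × S`: `Y₀ = {b ∈ B : b⁺ = 1}` and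
`Y_{n+1} = {b ∈ B : b⁺ ∈ Yₙ⁻}`. -/
def Ynat (B : Subgroup (S × S)) : ℕ → Subgroup (S × S)
  | 0 => B ⊓ (MonoidHom.snd S S).ker
  | n + 1 => B ⊓ (Subgroup.map (MonoidHom.fst S S) (Ynat B n)).comap (MonoidHom.snd S S)

/-- `X i` for an integer index `i`, trivial for `i < 0`. -/
def X (B : Subgroup (S × S)) (i : ℤ) : Subgroup (S × S) :=
  if i < 0 then ⊥ else Xnat B i.toNat

/-- `Y i` for an integer index `i`, trivial for `i < 0`. -/
def Y (B : Subgroup (S × S)) (i : ℤ) : Subgroup (S × S) :=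
  if i < 0 then ⊥ else Ynat B i.toNat

/-- The next-branch set `N(U) = {b ∈ B : b⁻ ∈ U⁺}`. -/
def N (B U : Subgroup (S × S)) : Subgroup (S × S) :=
  B ⊓ (Subgroup.map (MonoidHom.snd S S) U).comap (MonoidHom.fst S S)

/-- The previous-branch set `P(U) = {b ∈ B : b⁺ ∈ U⁻}`. -/
def P (B U : Subgroup (S × S)) : Subgroup (S × S) :=
  B ⊓ (Subgroup.map (MonoidHom.fst S S) U).comap (MonoidHom.snd S S)

/-- `IsQuotIso J H J' H'` says that `J` (viewed inside `H`) is normal in `H`, `J'` is normal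
in `H'`, and there is a group isomorphism `H / J ≅ H' / J'`. -/
def IsQuotIso {G₁ G₂ : Type*} [Group G₁] [Group G₂]
    (J H : Subgroup G₁) (J' H' : Subgroup G₂) : Prop :=
  (J.subgroupOf H).Normal ∧ (J'.subgroupOf H').Normal ∧
    ∀ [(J.subgroupOf H).Normal] [(J'.subgroupOf H').Normal],
      Nonempty ((H ⧸ J.subgroupOf H) ≃* (H' ⧸ J'.subgroupOf H'))

/-- `T` is a right transversal of `J` inside `H`: `T ⊆ H` and `T` meets every right coset
of `J` contained in `H` in exactly one element. -/
def IsRightTransversalIn {G : Type*} [Group G] (J H : Subgroup G) (T : Set G) : Prop :=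
  T ⊆ (H : Set G) ∧ ∀ h ∈ H, ∃! t, t ∈ T ∧ t * h⁻¹ ∈ J

/-- The group of trellis path segments `(b₀, …, bₙ)` with `b_j ∈ F j` and matching states
`b_j⁺ = b_{j+1}⁻`; a subgroup of the direct product `(S × S)^{n+1}`. -/
def chainSubgroup (n : ℕ) (F : ℤ → Subgroup (S × S)) : Subgroup (Fin (n + 1) → S × S) where
  carrier := {b | (∀ i : Fin (n + 1), b i ∈ F (i : ℤ)) ∧
    ∀ i : Fin n, (b i.castSucc).2 = (b i.succ).1}
  one_mem' := ⟨fun _ => one_mem _, fun _ => rfl⟩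
  mul_mem' := by
    rintro a b ⟨ha1, ha2⟩ ⟨hb1, hb2⟩
    refine ⟨fun i => mul_mem (ha1 i) (hb1 i), fun i => ?_⟩
    simp only [Pi.mul_apply, Prod.snd_mul, Prod.fst_mul, ha2 i, hb2 i]
  inv_mem' := by
    rintro a ⟨ha1, ha2⟩
    refine ⟨fun i => inv_mem (ha1 i), fun i => ?_⟩
    simp only [Pi.inv_apply, Prod.snd_inv, Prod.fst_inv, ha2 i]

/-- `U ⨝ N(U)`: the group of trellis path segments `(b, b')` of length two with `b ∈ U`,
`b' ∈ N(U)` and `b⁺ = b'⁻`; a subgroup of the direct product `(S × S) × (S × S)`. -/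
def JoinN (B U : Subgroup (S × S)) : Subgroup ((S × S) × (S × S)) where
  carrier := {p | p.1 ∈ U ∧ p.2 ∈ N B U ∧ p.1.2 = p.2.1}
  one_mem' := ⟨one_mem _, one_mem _, rfl⟩
  mul_mem' := by
    rintro a b ⟨ha1, ha2, ha3⟩ ⟨hb1, hb2, hb3⟩
    exact ⟨mul_mem ha1 hb1, mul_mem ha2 hb2, by
      simp only [Prod.fst_mul, Prod.snd_mul, ha3, hb3]⟩
  inv_mem' := by
    rintro a ⟨ha1, ha2, ha3⟩
    exact ⟨inv_mem ha1, inv_mem ha2, by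
      simp only [Prod.fst_inv, Prod.snd_inv, ha3]⟩

/-- `H_j = X_{j-1}(X_j ∩ Y_{k-j})` (as a subgroup, realized as the join). -/
def HH (B : Subgroup (S × S)) (k j : ℤ) : Subgroup (S × S) :=
  X B (j - 1) ⊔ (X B j ⊓ Y B (k - j))

/-- `J_j = X_{j-1}(X_j ∩ Y_{k-j-m})` (as a subgroup, realized as the join). -/
def JJ (B : Subgroup (S × S)) (k m j : ℤ) : Subgroup (S × S) :=
  X B (j - 1) ⊔ (X B j ⊓ Y B (k - j - m))


section Aux

variable {B : Subgroup (S × S)}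

lemma mem_Xnat_zero {b : S × S} : b ∈ Xnat B 0 ↔ b ∈ B ∧ b.1 = 1 := Iff.rfl

lemma mem_Xnat_succ {b : S × S} {n : ℕ} :
    b ∈ Xnat B (n + 1) ↔ b ∈ B ∧ ∃ c ∈ Xnat B n, c.2 = b.1 := Iff.rfl

lemma mem_Ynat_zero {b : S × S} : b ∈ Ynat B 0 ↔ b ∈ B ∧ b.2 = 1 := Iff.rfl

lemma mem_Ynat_succ {b : S × S} {n : ℕ} :
    b ∈ Ynat B (n + 1) ↔ b ∈ B ∧ ∃ c ∈ Ynat B n, c.1 = b.2 := Iff.rfl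

lemma Xnat_le_B (n : ℕ) : Xnat B n ≤ B := by cases n <;> exact inf_le_left

lemma Ynat_le_B (n : ℕ) : Ynat B n ≤ B := by cases n <;> exact inf_le_left

lemma X_eq_Xnat {i : ℤ} (hi : 0 ≤ i) : X B i = Xnat B i.toNat := if_neg (not_lt.mpr hi)

lemma X_neg {i : ℤ} (hi : i < 0) : X B i = ⊥ := if_pos hi

lemma Y_eq_Ynat {i : ℤ} (hi : 0 ≤ i) : Y B i = Ynat B i.toNat := if_neg (not_lt.mpr hi)

lemma Y_neg {i : ℤ} (hi : i < 0) : Y B i = ⊥ := if_pos hi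

lemma X_le_B (i : ℤ) : X B i ≤ B := by
  rcases lt_or_ge i 0 with h | h
  · rw [X_neg h]; exact bot_le
  · rw [X_eq_Xnat h]; exact Xnat_le_B _

lemma Y_le_B (i : ℤ) : Y B i ≤ B := by
  rcases lt_or_ge i 0 with h | h
  · rw [Y_neg h]; exact bot_le
  · rw [Y_eq_Ynat h]; exact Ynat_le_B _

lemma Xnat_le_succ (n : ℕ) : Xnat B n ≤ Xnat B (n + 1) := by
  induction n with
  | zero =>
    intro b hb
    obtain ⟨h1, h2⟩ := mem_Xnat_zero.mp hb
    exact mem_Xnat_succ.mpr ⟨h1, 1, one_mem _, by simp [h2]⟩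
  | succ n ih =>
    intro b hb
    obtain ⟨h1, c, hc, he⟩ := mem_Xnat_succ.mp hb
    exact mem_Xnat_succ.mpr ⟨h1, c, ih hc, he⟩

lemma Ynat_le_succ (n : ℕ) : Ynat B n ≤ Ynat B (n + 1) := by
  induction n with
  | zero =>
    intro b hb
    obtain ⟨h1, h2⟩ := mem_Ynat_zero.mp hb
    exact mem_Ynat_succ.mpr ⟨h1, 1, one_mem _, by simp [h2]⟩
  | succ n ih =>
    intro b hb
    obtain ⟨h1, c, hc, he⟩ := mem_Ynat_succ.mp hb
    exact mem_Ynat_succ.mpr ⟨h1, c, ih hc, he⟩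

lemma X_mono {i j : ℤ} (h : i ≤ j) : X B i ≤ X B j := by
  rcases lt_or_ge i 0 with hi | hi
  · rw [X_neg hi]; exact bot_le
  · rw [X_eq_Xnat hi, X_eq_Xnat (hi.trans h)]
    exact monotone_nat_of_le_succ Xnat_le_succ (by omega : i.toNat ≤ j.toNat)

lemma Y_mono {i j : ℤ} (h : i ≤ j) : Y B i ≤ Y B j := by
  rcases lt_or_ge i 0 with hi | hi
  · rw [Y_neg hi]; exact bot_le
  · rw [Y_eq_Ynat hi, Y_eq_Ynat (hi.trans h)]
    exact monotone_nat_of_le_succ Ynat_le_succ (by omega : i.toNat ≤ j.toNat)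

lemma mem_X_of_fst {i : ℤ} (hi : 0 ≤ i) {b : S × S} (hb : b ∈ B)
    (h : ∃ c ∈ X B (i - 1), c.2 = b.1) : b ∈ X B i := by
  obtain ⟨c, hc, he⟩ := h
  rcases eq_or_lt_of_le hi with h0 | h0
  · have hcbot : c = 1 := by
      rw [X_neg (by omega : i - 1 < 0)] at hc
      simpa using hc
    rw [X_eq_Xnat hi, show i.toNat = 0 by omega]
    exact mem_Xnat_zero.mpr ⟨hb, by rw [← he, hcbot]; rfl⟩
  · rw [X_eq_Xnat hi, show i.toNat = (i - 1).toNat + 1 by omega]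
    refine mem_Xnat_succ.mpr ⟨hb, c, ?_, he⟩
    rwa [X_eq_Xnat (by omega : (0:ℤ) ≤ i - 1)] at hc

lemma fst_eq_of_mem_X {i : ℤ} (hi : 0 ≤ i) {b : S × S} (h : b ∈ X B i) :
    ∃ c ∈ X B (i - 1), c.2 = b.1 := by
  rcases eq_or_lt_of_le hi with h0 | h0
  · rw [X_eq_Xnat hi, show i.toNat = 0 by omega] at h
    exact ⟨1, one_mem _, by rw [mem_Xnat_zero.mp h |>.2]; rfl⟩
  · rw [X_eq_Xnat hi, show i.toNat = (i - 1).toNat + 1 by omega] at h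
    obtain ⟨h1, c, hc, he⟩ := mem_Xnat_succ.mp h
    exact ⟨c, by rwa [X_eq_Xnat (by omega : (0:ℤ) ≤ i - 1)], he⟩

lemma mem_Y_of_snd {i : ℤ} (hi : 0 ≤ i) {b : S × S} (hb : b ∈ B)
    (h : ∃ c ∈ Y B (i - 1), c.1 = b.2) : b ∈ Y B i := by
  obtain ⟨c, hc, he⟩ := h
  rcases eq_or_lt_of_le hi with h0 | h0
  · have hcbot : c = 1 := by
      rw [Y_neg (by omega : i - 1 < 0)] at hc
      simpa using hc
    rw [Y_eq_Ynat hi, show i.toNat = 0 by omega]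
    exact mem_Ynat_zero.mpr ⟨hb, by rw [← he, hcbot]; rfl⟩
  · rw [Y_eq_Ynat hi, show i.toNat = (i - 1).toNat + 1 by omega]
    refine mem_Ynat_succ.mpr ⟨hb, c, ?_, he⟩
    rwa [Y_eq_Ynat (by omega : (0:ℤ) ≤ i - 1)] at hc

lemma snd_eq_of_mem_Y {i : ℤ} (hi : 0 ≤ i) {b : S × S} (h : b ∈ Y B i) :
    ∃ c ∈ Y B (i - 1), c.1 = b.2 := by
  rcases eq_or_lt_of_le hi with h0 | h0
  · rw [Y_eq_Ynat hi, show i.toNat = 0 by omega] at h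
    exact ⟨1, one_mem _, by rw [mem_Ynat_zero.mp h |>.2]; rfl⟩
  · rw [Y_eq_Ynat hi, show i.toNat = (i - 1).toNat + 1 by omega] at h
    obtain ⟨h1, c, hc, he⟩ := mem_Ynat_succ.mp h
    exact ⟨c, by rwa [Y_eq_Ynat (by omega : (0:ℤ) ≤ i - 1)], he⟩

lemma exists_fst_eq (hB1 : Subgroup.map (MonoidHom.fst S S) B = ⊤) (s : S) :
    ∃ b ∈ B, b.1 = s := by
  have : s ∈ Subgroup.map (MonoidHom.fst S S) B := by rw [hB1]; trivial
  exact Subgroup.mem_map.mp this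

lemma exists_snd_eq (hB2 : Subgroup.map (MonoidHom.snd S S) B = ⊤) (s : S) :
    ∃ b ∈ B, b.2 = s := by
  have : s ∈ Subgroup.map (MonoidHom.snd S S) B := by rw [hB2]; trivial
  exact Subgroup.mem_map.mp this

lemma Xnat_conj (hB2 : Subgroup.map (MonoidHom.snd S S) B = ⊤) (n : ℕ) :
    ∀ b ∈ B, ∀ x ∈ Xnat B n, b * x * b⁻¹ ∈ Xnat B n := by
  induction n with
  | zero =>
    intro b hb x hx
    obtain ⟨hx1, hx2⟩ := mem_Xnat_zero.mp hx
    refine mem_Xnat_zero.mpr ⟨mul_mem (mul_mem hb hx1) (inv_mem hb), ?_⟩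
    simp [Prod.fst_mul, hx2]
  | succ n ih =>
    intro b hb x hx
    obtain ⟨hx1, c, hc, he⟩ := mem_Xnat_succ.mp hx
    obtain ⟨d, hd, hde⟩ := exists_snd_eq hB2 b.1
    refine mem_Xnat_succ.mpr ⟨mul_mem (mul_mem hb hx1) (inv_mem hb),
      d * c * d⁻¹, ih d hd c hc, ?_⟩
    simp [Prod.fst_mul, Prod.snd_mul, hde, he]

lemma Ynat_conj (hB1 : Subgroup.map (MonoidHom.fst S S) B = ⊤) (n : ℕ) :
    ∀ b ∈ B, ∀ x ∈ Ynat B n, b * x * b⁻¹ ∈ Ynat B n := by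
  induction n with
  | zero =>
    intro b hb x hx
    obtain ⟨hx1, hx2⟩ := mem_Ynat_zero.mp hx
    refine mem_Ynat_zero.mpr ⟨mul_mem (mul_mem hb hx1) (inv_mem hb), ?_⟩
    simp [Prod.snd_mul, hx2]
  | succ n ih =>
    intro b hb x hx
    obtain ⟨hx1, c, hc, he⟩ := mem_Ynat_succ.mp hx
    obtain ⟨d, hd, hde⟩ := exists_fst_eq hB1 b.2
    refine mem_Ynat_succ.mpr ⟨mul_mem (mul_mem hb hx1) (inv_mem hb),
      d * c * d⁻¹, ih d hd c hc, ?_⟩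
    simp [Prod.fst_mul, Prod.snd_mul, hde, he]

lemma X_conj (hB2 : Subgroup.map (MonoidHom.snd S S) B = ⊤) {i : ℤ}
    {b x : S × S} (hb : b ∈ B) (hx : x ∈ X B i) : b * x * b⁻¹ ∈ X B i := by
  rcases lt_or_ge i 0 with h | h
  · rw [X_neg h] at hx ⊢
    simp only [Subgroup.mem_bot] at hx ⊢
    simp [hx]
  · rw [X_eq_Xnat h] at hx ⊢
    exact Xnat_conj hB2 _ b hb x hx

lemma Y_conj (hB1 : Subgroup.map (MonoidHom.fst S S) B = ⊤) {i : ℤ}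
    {b x : S × S} (hb : b ∈ B) (hx : x ∈ Y B i) : b * x * b⁻¹ ∈ Y B i := by
  rcases lt_or_ge i 0 with h | h
  · rw [Y_neg h] at hx ⊢
    simp only [Subgroup.mem_bot] at hx ⊢
    simp [hx]
  · rw [Y_eq_Ynat h] at hx ⊢
    exact Ynat_conj hB1 _ b hb x hx

/-- Decomposition of an element of a join `N ⊔ K` when `K` normalizes `N`. -/
lemma sup_decomp {G : Type*} [Group G] {N K : Subgroup G}
    (hconj : ∀ y ∈ K, ∀ x ∈ N, y * x * y⁻¹ ∈ N) {z : G} (hz : z ∈ N ⊔ K) :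
    ∃ x ∈ N, ∃ y ∈ K, z = x * y := by
  rw [Subgroup.sup_eq_closure] at hz
  induction hz using Subgroup.closure_induction with
  | mem g hg =>
    rcases hg with hg | hg
    · exact ⟨g, hg, 1, one_mem _, (mul_one g).symm⟩
    · exact ⟨1, one_mem _, g, hg, (one_mul g).symm⟩
  | one => exact ⟨1, one_mem _, 1, one_mem _, (mul_one 1).symm⟩
  | mul a b ha hb iha ihb =>
    obtain ⟨x, hx, y, hy, rfl⟩ := iha
    obtain ⟨x', hx', y', hy', rfl⟩ := ihb
    exact ⟨x * (y * x' * y⁻¹), mul_mem hx (hconj y hy x' hx'),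
      y * y', mul_mem hy hy', by group⟩
  | inv a ha iha =>
    obtain ⟨x, hx, y, hy, rfl⟩ := iha
    exact ⟨y⁻¹ * x⁻¹ * y, by simpa using hconj y⁻¹ (inv_mem hy) x⁻¹ (inv_mem hx),
      y⁻¹, inv_mem hy, by group⟩

end Aux

/-- `Gs B r i = X_{i-1}(X_i ∩ Y_{r-i})`; unifies `HH` and `JJ`. -/
def Gs (B : Subgroup (S × S)) (r i : ℤ) : Subgroup (S × S) :=
  X B (i - 1) ⊔ (X B i ⊓ Y B (r - i))

section Gs

variable {B : Subgroup (S × S)}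

lemma HH_eq_Gs (k : ℤ) : HH B k = Gs B k := rfl

lemma JJ_eq_Gs (k m : ℤ) : JJ B k m = Gs B (k - m) := by
  funext j
  rw [JJ, Gs, show k - j - m = k - m - j by ring]

lemma Gs_le_B {r i : ℤ} : Gs B r i ≤ B :=
  sup_le (X_le_B _) (inf_le_left.trans (X_le_B _))

lemma Gs_mono_r {r r' i : ℤ} (h : r ≤ r') : Gs B r i ≤ Gs B r' i :=
  sup_le le_sup_left ((inf_le_inf le_rfl (Y_mono (by omega))).trans le_sup_right)

lemma X_zero_le_Gs {r i : ℤ} (hi : 1 ≤ i) : X B 0 ≤ Gs B r i :=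
  (X_mono (by omega : (0:ℤ) ≤ i - 1)).trans le_sup_left

lemma Gs_fwd (hB1 : Subgroup.map (MonoidHom.fst S S) B = ⊤) {r i : ℤ} (hi : 0 ≤ i) :
    Subgroup.map (MonoidHom.snd S S) (Gs B r i) ≤
      Subgroup.map (MonoidHom.fst S S) (Gs B r (i + 1)) := by
  rw [Gs, Subgroup.map_sup]
  apply sup_le
  · intro s hs
    obtain ⟨c, hc, he⟩ := Subgroup.mem_map.mp hs
    obtain ⟨b, hb, hbe⟩ := exists_fst_eq hB1 s
    have hbX : b ∈ X B (i + 1 - 1) := by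
      rw [show i + 1 - 1 = i by ring]
      exact mem_X_of_fst hi hb ⟨c, hc, he.trans hbe.symm⟩
    exact Subgroup.mem_map.mpr ⟨b, le_sup_left (α := Subgroup (S × S)) hbX, hbe⟩
  · intro s hs
    obtain ⟨c, hc, he⟩ := Subgroup.mem_map.mp hs
    rcases lt_or_ge (r - i) 0 with hneg | hpos
    · have : c = 1 := by
        have := hc.2
        rw [Y_neg hneg] at this
        simpa using this
      have hs1 : s = 1 := by rw [← he, this]; simp
      rw [hs1]
      exact one_mem _
    · obtain ⟨e, heY, hee⟩ := snd_eq_of_mem_Y hpos hc.2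
      have heB : e ∈ B := Y_le_B _ heY
      have heX : e ∈ X B (i + 1) := by
        refine mem_X_of_fst (by omega) heB ⟨c, ?_, hee.symm⟩
        rw [show i + 1 - 1 = i by ring]
        exact hc.1
      have heY' : e ∈ Y B (r - (i + 1)) := by
        rw [show r - (i + 1) = r - i - 1 by ring]
        exact heY
      exact Subgroup.mem_map.mpr
        ⟨e, le_sup_right (α := Subgroup (S × S)) ⟨heX, heY'⟩, hee.trans he⟩

lemma Gs_bwd (hB2 : Subgroup.map (MonoidHom.snd S S) B = ⊤) {r i : ℤ} (hi : 1 ≤ i) :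
    Subgroup.map (MonoidHom.fst S S) (Gs B r i) ≤
      Subgroup.map (MonoidHom.snd S S) (Gs B r (i - 1)) := by
  rw [Gs, Subgroup.map_sup]
  apply sup_le
  · intro s hs
    obtain ⟨c, hc, he⟩ := Subgroup.mem_map.mp hs
    obtain ⟨e, heX, hee⟩ := fst_eq_of_mem_X (by omega : (0:ℤ) ≤ i - 1) hc
    have heX' : e ∈ X B (i - 1 - 1) := heX
    exact Subgroup.mem_map.mpr
      ⟨e, le_sup_left (α := Subgroup (S × S)) heX', hee.trans he⟩
  · intro s hs
    obtain ⟨c, hc, he⟩ := Subgroup.mem_map.mp hs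
    rcases lt_or_ge (r - i) 0 with hneg | hpos
    · have : c = 1 := by
        have := hc.2
        rw [Y_neg hneg] at this
        simpa using this
      have hs1 : s = 1 := by rw [← he, this]; simp
      rw [hs1]
      exact one_mem _
    · obtain ⟨e, heX, hee⟩ := fst_eq_of_mem_X (by omega : (0:ℤ) ≤ i) hc.1
      have heB : e ∈ B := X_le_B _ heX
      have heY : e ∈ Y B (r - (i - 1)) := by
        refine mem_Y_of_snd (by omega) heB ⟨c, ?_, hee.symm⟩
        rw [show r - (i - 1) - 1 = r - i by ring]
        exact hc.2
      exact Subgroup.mem_map.mpr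
        ⟨e, le_sup_right (α := Subgroup (S × S)) ⟨heX, heY⟩, hee.trans he⟩

/-- Key lemma: an element of `H_i` with trivial second component already lies in `J_i`. -/
lemma mem_Gs_of_snd_one (hB1 : Subgroup.map (MonoidHom.fst S S) B = ⊤)
    (hB2 : Subgroup.map (MonoidHom.snd S S) B = ⊤)
    {r r' i : ℤ} (hi : 0 ≤ i) (hr : 0 ≤ r' - i) (hrr' : r' ≤ r)
    {z : S × S} (hz : z ∈ Gs B r i) (hz2 : z.2 = 1) : z ∈ Gs B r' i := by
  obtain ⟨x, hx, y, hy, rfl⟩ := sup_decomp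
    (fun y hy x hx => X_conj hB2 (Gs_le_B (le_sup_right (α := Subgroup (S × S)) hy)) hx) hz
  have hyX : y ∈ X B i := hy.1
  have hxX : x ∈ X B i := X_mono (by omega) hx
  have hxB : x ∈ B := X_le_B _ hx
  have hyx : y * x ∈ X B i ⊓ Y B (r' - i) := by
    refine ⟨mul_mem hyX hxX, Y_mono hr ?_⟩
    have h2 : (y * x).2 = 1 := by
      have : x.2 * y.2 = 1 := hz2
      simp only [Prod.snd_mul]
      -- from x.2 * y.2 = 1 we get y.2 * x.2 = 1
      calc y.2 * x.2 = x.2⁻¹ * (x.2 * y.2) * x.2 := by group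
      _ = 1 := by rw [this]; group
    rw [Y_eq_Ynat le_rfl]
    exact mem_Ynat_zero.mpr ⟨mul_mem (X_le_B _ hyX) hxB, h2⟩
  have : x * (y * x) * x⁻¹ ∈ X B i ⊓ Y B (r' - i) :=
    ⟨X_conj hB2 hxB hyx.1, Y_conj hB1 hxB hyx.2⟩
  have hxy : x * y = x * (y * x) * x⁻¹ := by group
  rw [hxy]
  exact le_sup_right (α := Subgroup (S × S)) this

end Gs


section Chain

variable {B : Subgroup (S × S)}

lemma mem_chain {n : ℕ} {F : ℤ → Subgroup (S × S)} {c : Fin (n + 1) → S × S} :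
    c ∈ chainSubgroup n F ↔ (∀ i : Fin (n + 1), c i ∈ F (i : ℤ)) ∧
      ∀ i : Fin n, (c i.castSucc).2 = (c i.succ).1 := Iff.rfl

lemma fin_zero_mk {n : ℕ} (hp : 0 < n + 1) : (⟨0, hp⟩ : Fin (n + 1)) = 0 := rfl

/-- Forward propagation along a chain: if the `0`-th branch lies in the smaller
subgroup `Gs B r' 0`, then so do all later branches. -/
lemma chain_fwd (hB1 : Subgroup.map (MonoidHom.fst S S) B = ⊤)
    {n : ℕ} {r r' : ℤ} {c : Fin (n + 1) → S × S}
    (hc : c ∈ chainSubgroup n (Gs B r)) (h0 : c 0 ∈ Gs B r' 0) :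
    ∀ i : Fin (n + 1), c i ∈ Gs B r' (i : ℤ) := by
  obtain ⟨hmem, hadj⟩ := hc
  have key : ∀ p : ℕ, ∀ hp : p < n + 1, c ⟨p, hp⟩ ∈ Gs B r' (p : ℤ) := by
    intro p
    induction p with
    | zero =>
      intro hp
      rw [fin_zero_mk hp]
      simpa using h0
    | succ p ih =>
      intro hp
      have hp' : p < n + 1 := by omega
      have hprev := ih hp'
      have hpn : p < n := by omega
      have hadj' : (c ⟨p, hp'⟩).2 = (c ⟨p + 1, hp⟩).1 := hadj ⟨p, hpn⟩
      have hsnd : (c ⟨p, hp'⟩).2 ∈ Subgroup.map (MonoidHom.snd S S) (Gs B r' (p : ℤ)) :=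
        Subgroup.mem_map.mpr ⟨_, hprev, rfl⟩
      have hfst := Gs_fwd hB1 (by omega) hsnd
      rw [hadj'] at hfst
      obtain ⟨e, heGs, hee⟩ := Subgroup.mem_map.mp hfst
      have hcB : c ⟨p + 1, hp⟩ ∈ B := Gs_le_B (hmem ⟨p + 1, hp⟩)
      have heB : e ∈ B := Gs_le_B heGs
      have hX0 : c ⟨p + 1, hp⟩ * e⁻¹ ∈ X B 0 := by
        rw [X_eq_Xnat le_rfl, show (0 : ℤ).toNat = 0 from rfl]
        refine mem_Xnat_zero.mpr ⟨mul_mem hcB (inv_mem heB), ?_⟩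
        have : e.1 = (c ⟨p + 1, hp⟩).1 := hee
        simp [Prod.fst_mul, this]
      have : c ⟨p + 1, hp⟩ = (c ⟨p + 1, hp⟩ * e⁻¹) * e := by group
      rw [this, show ((p + 1 : ℕ) : ℤ) = (p : ℤ) + 1 by push_cast; ring]
      exact mul_mem (X_zero_le_Gs (by omega) hX0) heGs
  intro i
  have := key i.val i.isLt
  simpa using this

/-- Backward propagation along a chain: if the `j`-th branch lies in the smaller
subgroup, then so does the `0`-th branch. -/
lemma chain_bwd (hB1 : Subgroup.map (MonoidHom.fst S S) B = ⊤)
    (hB2 : Subgroup.map (MonoidHom.snd S S) B = ⊤)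
    {n : ℕ} {r r' : ℤ} (hrr' : r' ≤ r) (hn : (n : ℤ) ≤ r' + 1)
    {c : Fin (n + 1) → S × S} (hc : c ∈ chainSubgroup n (Gs B r))
    {j : Fin (n + 1)} (hj : c j ∈ Gs B r' (j : ℤ)) :
    c 0 ∈ Gs B r' 0 := by
  obtain ⟨hmem, hadj⟩ := hc
  have key : ∀ t : ℕ, ∀ p : ℕ, ∀ hp : p < n + 1, p ≤ j.val → j.val - p = t →
      c ⟨p, hp⟩ ∈ Gs B r' (p : ℤ) := by
    intro t
    induction t with
    | zero =>
      intro p hp hpj ht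
      have hpj' : p = j.val := by omega
      subst hpj'
      have hje : (⟨j.val, hp⟩ : Fin (n + 1)) = j := Fin.ext rfl
      rw [hje]
      exact hj
    | succ t ih =>
      intro p hp hpj ht
      have hp1 : p + 1 < n + 1 := by omega
      have hnext := ih (p + 1) hp1 (by omega) (by omega)
      have hpn : p < n := by omega
      have hadj' : (c ⟨p, hp⟩).2 = (c ⟨p + 1, hp1⟩).1 := hadj ⟨p, hpn⟩
      have hfst : (c ⟨p + 1, hp1⟩).1 ∈
          Subgroup.map (MonoidHom.fst S S) (Gs B r' (((p + 1 : ℕ) : ℤ))) :=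
        Subgroup.mem_map.mpr ⟨_, hnext, rfl⟩
      have hbwd := Gs_bwd hB2 (by push_cast; omega) hfst
      rw [show ((p + 1 : ℕ) : ℤ) - 1 = (p : ℤ) by push_cast; ring] at hbwd
      obtain ⟨e, heGs, hee⟩ := Subgroup.mem_map.mp hbwd
      have hz : c ⟨p, hp⟩ * e⁻¹ ∈ Gs B r (p : ℤ) := by
        refine mul_mem ?_ (inv_mem (Gs_mono_r hrr' heGs))
        simpa using hmem ⟨p, hp⟩
      have hz2 : (c ⟨p, hp⟩ * e⁻¹).2 = 1 := by
        have he2 : e.2 = (c ⟨p, hp⟩).2 := by rw [hadj']; exact hee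
        simp [Prod.snd_mul, he2]
      have hmemJ := mem_Gs_of_snd_one hB1 hB2 (by omega)
        (by omega : 0 ≤ r' - (p : ℤ)) hrr' hz hz2
      have : c ⟨p, hp⟩ = (c ⟨p, hp⟩ * e⁻¹) * e := by group
      rw [this]
      exact mul_mem hmemJ heGs
  have h0 := key j.val 0 (by omega) (by omega) rfl
  rw [fin_zero_mk] at h0
  simpa using h0

/-- Any branch in `H_j` extends to a full chain of branches through coordinate `j`. -/
lemma exists_chain_through (hB1 : Subgroup.map (MonoidHom.fst S S) B = ⊤)
    (hB2 : Subgroup.map (MonoidHom.snd S S) B = ⊤)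
    {n : ℕ} {r : ℤ} (j : Fin (n + 1)) {h : S × S} (hh : h ∈ Gs B r (j : ℤ)) :
    ∃ c ∈ chainSubgroup n (Gs B r), c j = h := by
  classical
  have fwdP : ∀ (i : ℤ) (x : S × S), 0 ≤ i → x ∈ Gs B r i →
      ∃ y, y ∈ Gs B r (i + 1) ∧ y.1 = x.2 := by
    intro i x hi hx
    have hs : x.2 ∈ Subgroup.map (MonoidHom.snd S S) (Gs B r i) :=
      Subgroup.mem_map.mpr ⟨x, hx, rfl⟩
    obtain ⟨y, hy, hye⟩ := Subgroup.mem_map.mp (Gs_fwd hB1 hi hs)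
    exact ⟨y, hy, hye⟩
  have bwdP : ∀ (i : ℤ) (x : S × S), 1 ≤ i → x ∈ Gs B r i →
      ∃ y, y ∈ Gs B r (i - 1) ∧ y.2 = x.1 := by
    intro i x hi hx
    have hs : x.1 ∈ Subgroup.map (MonoidHom.fst S S) (Gs B r i) :=
      Subgroup.mem_map.mpr ⟨x, hx, rfl⟩
    obtain ⟨y, hy, hye⟩ := Subgroup.mem_map.mp (Gs_bwd hB2 hi hs)
    exact ⟨y, hy, hye⟩
  set F : ℤ → (S × S) → (S × S) := fun i x =>
    if hx : 0 ≤ i ∧ x ∈ Gs B r i then (fwdP i x hx.1 hx.2).choose else 1 with hF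
  set Bw : ℤ → (S × S) → (S × S) := fun i x =>
    if hx : 1 ≤ i ∧ x ∈ Gs B r i then (bwdP i x hx.1 hx.2).choose else 1 with hBw
  set u : ℕ → S × S := fun s => Nat.rec h (fun s prev => F ((j : ℤ) + s) prev) s with hu
  set d : ℕ → S × S := fun s => Nat.rec h (fun s prev => Bw ((j : ℤ) - s) prev) s with hd
  have hu_succ : ∀ s : ℕ, u (s + 1) = F ((j : ℤ) + s) (u s) := fun s => rfl
  have hd_succ : ∀ s : ℕ, d (s + 1) = Bw ((j : ℤ) - s) (d s) := fun s => rfl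
  have hu0 : u 0 = h := rfl
  have hd0 : d 0 = h := rfl
  have hu_mem : ∀ s : ℕ, u s ∈ Gs B r ((j : ℤ) + s) := by
    intro s
    induction s with
    | zero => simpa [hu0] using hh
    | succ s ih =>
      have hcond : 0 ≤ (j : ℤ) + s ∧ u s ∈ Gs B r ((j : ℤ) + s) := ⟨by omega, ih⟩
      rw [hu_succ, hF]
      simp only [dif_pos hcond]
      have := (fwdP _ _ hcond.1 hcond.2).choose_spec.1
      have hcast : ((j : ℤ) + (((s + 1 : ℕ)) : ℤ)) = (j : ℤ) + (s : ℤ) + 1 := by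
        push_cast; ring
      rw [hcast]
      exact this
  have hu_adj : ∀ s : ℕ, (u (s + 1)).1 = (u s).2 := by
    intro s
    have hcond : 0 ≤ (j : ℤ) + s ∧ u s ∈ Gs B r ((j : ℤ) + s) := ⟨by omega, hu_mem s⟩
    rw [hu_succ, hF]
    simp only [dif_pos hcond]
    exact (fwdP _ _ hcond.1 hcond.2).choose_spec.2
  have hd_mem : ∀ s : ℕ, s ≤ j.val → d s ∈ Gs B r ((j : ℤ) - s) := by
    intro s
    induction s with
    | zero => intro _; simpa [hd0] using hh
    | succ s ih =>
      intro hsj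
      have ihm := ih (by omega)
      have hcond : 1 ≤ (j : ℤ) - s ∧ d s ∈ Gs B r ((j : ℤ) - s) := by
        refine ⟨?_, ihm⟩
        have : s + 1 ≤ j.val := hsj
        omega
      rw [hd_succ, hBw]
      simp only [dif_pos hcond]
      have := (bwdP _ _ hcond.1 hcond.2).choose_spec.1
      have hcast : ((j : ℤ) - (((s + 1 : ℕ)) : ℤ)) = (j : ℤ) - (s : ℤ) - 1 := by
        push_cast; ring
      rw [hcast]
      exact this
  have hd_adj : ∀ s : ℕ, s + 1 ≤ j.val → (d (s + 1)).2 = (d s).1 := by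
    intro s hsj
    have hcond : 1 ≤ (j : ℤ) - s ∧ d s ∈ Gs B r ((j : ℤ) - s) :=
      ⟨by omega, hd_mem s (by omega)⟩
    rw [hd_succ, hBw]
    simp only [dif_pos hcond]
    exact (bwdP _ _ hcond.1 hcond.2).choose_spec.2
  refine ⟨fun i => if j.val ≤ i.val then u (i.val - j.val) else d (j.val - i.val), ⟨?_, ?_⟩, ?_⟩
  · intro i
    by_cases hji : j.val ≤ i.val
    · simp only [if_pos hji]
      have := hu_mem (i.val - j.val)
      rwa [show (j : ℤ) + ((i.val - j.val : ℕ) : ℤ) = ((i.val : ℕ) : ℤ) by omega] at this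
    · simp only [if_neg hji]
      have := hd_mem (j.val - i.val) (by omega)
      rwa [show (j : ℤ) - ((j.val - i.val : ℕ) : ℤ) = ((i.val : ℕ) : ℤ) by omega] at this
  · intro i
    have hcs : (i.castSucc).val = i.val := rfl
    have hss : (i.succ).val = i.val + 1 := rfl
    by_cases hji : j.val ≤ i.val
    · simp only [hcs, hss, if_pos hji, if_pos (by omega : j.val ≤ i.val + 1)]
      rw [show i.val + 1 - j.val = (i.val - j.val) + 1 by omega]
      exact (hu_adj (i.val - j.val)).symm
    · by_cases hji1 : j.val ≤ i.val + 1
      · have hj1 : j.val = i.val + 1 := by omega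
        simp only [hcs, hss, if_neg hji, if_pos hji1]
        rw [show i.val + 1 - j.val = 0 by omega, show j.val - i.val = 1 by omega]
        have hda := hd_adj 0 (by omega)
        rw [hd0] at hda
        rw [hu0, show (1 : ℕ) = 0 + 1 from rfl, hda]
      · simp only [hcs, hss, if_neg hji, if_neg hji1]
        rw [show j.val - i.val = (j.val - (i.val + 1)) + 1 by omega]
        exact hd_adj (j.val - (i.val + 1)) (by omega)
  · simp only [le_refl, if_pos, Nat.sub_self]
    exact hu0

end Chain

/-- there is a right transversal `T` of `J_{[0,l]}` in `H_{[0,l]}` such that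
each coordinate map is injective on `T` and its image is a right transversal of `J_j` in
`H_j`. -/
theorem exists_componentwise_transversal
    (B : Subgroup (S × S))
    (hB1 : Subgroup.map (MonoidHom.fst S S) B = ⊤)
    (hB2 : Subgroup.map (MonoidHom.snd S S) B = ⊤)
    (ℓ k m l : ℤ) (hℓ : 1 ≤ ℓ)
    (hctl : Subgroup.map (MonoidHom.snd S S) (X B (ℓ - 1)) = ⊤)
    (hk0 : 0 < k) (hkℓ : k ≤ ℓ)
    (hm : 1 ≤ m) (hkm : 0 ≤ k - m)
    (hl0 : 0 < l) (hl : l ≤ k - m + 1) :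
    ∃ T : Set (Fin (l.toNat + 1) → S × S),
      IsRightTransversalIn (chainSubgroup l.toNat (JJ B k m))
        (chainSubgroup l.toNat (HH B k)) T ∧
      ∀ j : Fin (l.toNat + 1),
        Set.InjOn (fun t => t j) T ∧
        IsRightTransversalIn (JJ B k m (j : ℤ)) (HH B k (j : ℤ)) ((fun t => t j) '' T) := by
  classical
  rw [JJ_eq_Gs, HH_eq_Gs]
  set n := l.toNat with hn
  set r' := k - m with hr'
  have hrr' : r' ≤ k := by omega
  have hnr : (n : ℤ) ≤ r' + 1 := by omega
  have hJH : ∀ i : ℤ, Gs B r' i ≤ Gs B k i := fun _ => Gs_mono_r hrr'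
  -- canonical representatives of right cosets of `J₀` at coordinate 0
  set J0 : Subgroup (S × S) := Gs B r' 0 with hJ0
  set rep : S × S → S × S := fun h => ((QuotientGroup.mk (s := J0) h⁻¹).out)⁻¹ with hrep
  have hrep_coset : ∀ h : S × S, rep h * h⁻¹ ∈ J0 := by
    intro h
    have h1 : QuotientGroup.mk (s := J0) (rep h)⁻¹ = QuotientGroup.mk (s := J0) h⁻¹ := by
      rw [hrep]
      simp only [inv_inv]
      exact QuotientGroup.out_eq' _
    have h2 := QuotientGroup.eq.mp h1
    simpa using h2
  have hrep_inv : ∀ t h : S × S, t * h⁻¹ ∈ J0 → rep t = rep h := by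
    intro t h hth
    have h1 : QuotientGroup.mk (s := J0) t⁻¹ = QuotientGroup.mk (s := J0) h⁻¹ :=
      QuotientGroup.eq.mpr (by simpa using hth)
    rw [hrep]
    simp only [h1]
  have hrep_idem : ∀ h : S × S, rep (rep h) = rep h := fun h => hrep_inv _ _ (hrep_coset h)
  have hrep_memH : ∀ h ∈ Gs B k 0, rep h ∈ Gs B k 0 := by
    intro h hh
    have h1 : rep h = (rep h * h⁻¹) * h := by group
    rw [h1]
    exact mul_mem (hJH 0 (hrep_coset h)) hh
  have hcast0 : (((0 : Fin (n + 1)) : ℕ) : ℤ) = 0 := by simp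
  -- extension of a branch at coordinate 0 to a full chain
  set E : S × S → (Fin (n + 1) → S × S) := fun t =>
    if ht : t ∈ Gs B k 0 then
      (exists_chain_through hB1 hB2 (0 : Fin (n + 1))
        (show t ∈ Gs B k (((0 : Fin (n + 1)) : ℕ) : ℤ) by rw [hcast0]; exact ht)).choose
    else 1 with hE
  have hE_spec : ∀ t ∈ Gs B k 0, E t ∈ chainSubgroup n (Gs B k) ∧ E t 0 = t := by
    intro t ht
    rw [hE]
    simp only [dif_pos ht]
    exact (exists_chain_through hB1 hB2 (0 : Fin (n + 1))
      (show t ∈ Gs B k (((0 : Fin (n + 1)) : ℕ) : ℤ) by rw [hcast0]; exact ht)).choose_spec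
  set T : Set (Fin (n + 1) → S × S) :=
    (fun g => E (rep g)) '' ((Gs B k 0 : Set (S × S))) with hT
  have hTsub : T ⊆ (chainSubgroup n (Gs B k) : Set _) := by
    rintro t ⟨g, hg, rfl⟩
    exact (hE_spec _ (hrep_memH g hg)).1
  -- coordinate 0 of any chain lies in `H₀`
  have hcoord0 : ∀ c ∈ chainSubgroup n (Gs B k), c 0 ∈ Gs B k 0 := by
    intro c hc
    have := (mem_chain.mp hc).1 0
    rwa [hcast0] at this
  -- any element of `T` whose coset is right: covering lemma
  have hTcover : ∀ b ∈ chainSubgroup n (Gs B k),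
      E (rep (b 0)) * b⁻¹ ∈ chainSubgroup n (Gs B r') := by
    intro b hb
    have hb0 := hcoord0 b hb
    have hEmem := hE_spec _ (hrep_memH _ hb0)
    have hprod : E (rep (b 0)) * b⁻¹ ∈ chainSubgroup n (Gs B k) :=
      mul_mem hEmem.1 (inv_mem hb)
    have h00 : (E (rep (b 0)) * b⁻¹) 0 ∈ Gs B r' 0 := by
      have : (E (rep (b 0)) * b⁻¹) 0 = rep (b 0) * (b 0)⁻¹ := by
        simp [Pi.mul_apply, Pi.inv_apply, hEmem.2]
      rw [this]
      exact hrep_coset (b 0)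
    refine mem_chain.mpr ⟨?_, (mem_chain.mp hprod).2⟩
    exact chain_fwd hB1 hprod h00
  -- injectivity lemma: two elements of `T` agreeing modulo `J_j` at one coordinate agree
  have hTinj : ∀ t ∈ T, ∀ t' ∈ T, ∀ j : Fin (n + 1),
      t j * (t' j)⁻¹ ∈ Gs B r' (j : ℤ) → t = t' := by
    rintro t ⟨g, hg, rfl⟩ t' ⟨g', hg', rfl⟩ j hjj
    have hgm := hE_spec _ (hrep_memH _ hg)
    have hgm' := hE_spec _ (hrep_memH _ hg')
    have hcc : E (rep g) * (E (rep g'))⁻¹ ∈ chainSubgroup n (Gs B k) :=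
      mul_mem hgm.1 (inv_mem hgm'.1)
    have hjm : (E (rep g) * (E (rep g'))⁻¹) j ∈ Gs B r' (j : ℤ) := by
      have : (E (rep g) * (E (rep g'))⁻¹) j = E (rep g) j * (E (rep g') j)⁻¹ := rfl
      rw [this]
      exact hjj
    have h0 := chain_bwd hB1 hB2 hrr' hnr hcc hjm
    have h0' : rep g * (rep g')⁻¹ ∈ J0 := by
      have he : (E (rep g) * (E (rep g'))⁻¹) 0 = rep g * (rep g')⁻¹ := by
        simp [Pi.mul_apply, Pi.inv_apply, hgm.2, hgm'.2]
      rwa [he] at h0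
    have : rep g = rep g' := by
      have := hrep_inv _ _ h0'
      rwa [hrep_idem, hrep_idem] at this
    show E (rep g) = E (rep g')
    rw [this]
  refine ⟨T, ⟨hTsub, ?_⟩, fun j => ⟨?_, ?_, ?_⟩⟩
  · -- right transversal of the chain subgroups
    intro h hh
    refine ⟨E (rep (h 0)), ⟨⟨h 0, hcoord0 h hh, rfl⟩, hTcover h hh⟩, ?_⟩
    rintro t' ⟨⟨g, hg, rfl⟩, ht'J⟩
    have hgm := hE_spec _ (hrep_memH _ hg)
    have h0 : rep g * (h 0)⁻¹ ∈ J0 := by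
      have := (mem_chain.mp ht'J).1 0
      rw [hcast0] at this
      have he : (E (rep g) * h⁻¹) 0 = rep g * (h 0)⁻¹ := by
        simp [Pi.mul_apply, Pi.inv_apply, hgm.2]
      rwa [he] at this
    have : rep g = rep (h 0) := by
      have := hrep_inv _ _ h0
      rwa [hrep_idem] at this
    show E (rep g) = E (rep (h 0))
    rw [this]
  · -- injectivity of the j-th coordinate on T
    intro t ht t' ht' heq
    refine hTinj t ht t' ht' j ?_
    simp only at heq
    rw [heq]
    exact (by group : t' j * (t' j)⁻¹ = 1) ▸ one_mem _
  · -- image is contained in H_j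
    rintro s ⟨t, ht, rfl⟩
    exact (mem_chain.mp (hTsub ht)).1 j
  · -- image is a right transversal of J_j in H_j
    intro h hhj
    obtain ⟨b, hbc, hbj⟩ := exists_chain_through hB1 hB2 j hhj
    set t := E (rep (b 0)) with htdef
    have htT : t ∈ T := ⟨b 0, hcoord0 b hbc, rfl⟩
    have htJ : t * b⁻¹ ∈ chainSubgroup n (Gs B r') := hTcover b hbc
    have htj : t j * h⁻¹ ∈ Gs B r' (j : ℤ) := by
      have := (mem_chain.mp htJ).1 j
      have he : (t * b⁻¹) j = t j * h⁻¹ := by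
        simp [Pi.mul_apply, Pi.inv_apply, hbj]
      rwa [he] at this
    refine ⟨t j, ⟨⟨t, htT, rfl⟩, htj⟩, ?_⟩
    rintro s ⟨⟨t', ht'T, rfl⟩, hsJ⟩
    have hdiff : t' j * (t j)⁻¹ ∈ Gs B r' (j : ℤ) := by
      have := mul_mem hsJ (inv_mem htj)
      have he : t' j * h⁻¹ * (t j * h⁻¹)⁻¹ = t' j * (t j)⁻¹ := by group
      rwa [he] at this
    show t' j = t j
    rw [hTinj t' ht'T t htT j hdiff]


end GroupCodes
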